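/- Let n ≥ 2 and C ≥ (n-1)². If A is a real n×n matrix with positive entries such that A(i,j)·A(i',j') ≥ C·A(i,j')·A(i',j) for all i < i' and j < j', then det(A) ≥ 0. If moreover all these inequalities are strict, then det(A) > 0. -/
import Mathlib

open Equiv Equiv.Perm Finset

section Aux

variable {n : ℕ} (A : Matrix (Fin n) (Fin n) ℝ)

/-- Splitting the permutation product at two indices. -/
lemma prod_split (σ : Equiv.Perm (Fin n)) {j j' : Fin n} (hjj : j ≠ j') :
    ∏ i, A (σ i) i =
      A (σ j) j * (A (σ j') j' * ∏ i ∈ (Finset.univ.erase j).erase j', A (σ i) i) := by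
  rw [← Finset.mul_prod_erase Finset.univ (fun i => A (σ i) i) (Finset.mem_univ j),
    ← Finset.mul_prod_erase _ (fun i => A (σ i) i)
      (Finset.mem_erase.2 ⟨Ne.symm hjj, Finset.mem_univ j'⟩)]

/-- The swapped permutation product, split at the two indices. -/
lemma prod_swap_split (σ : Equiv.Perm (Fin n)) {j j' : Fin n} (hjj : j ≠ j') :
    ∏ i, A ((σ * Equiv.swap j j') i) i =
      A (σ j) j' * (A (σ j') j * ∏ i ∈ (Finset.univ.erase j).erase j', A (σ i) i) := by
  have h1 : ∏ i, A ((σ * Equiv.swap j j') i) i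
      = ∏ i, A (σ i) (Equiv.swap j j' i) := by
    have := Equiv.prod_comp (Equiv.swap j j')
      (fun i => A (σ i) (Equiv.swap j j' i))
    rw [← this]
    refine Finset.prod_congr rfl fun i _ => ?_
    simp [Equiv.swap_apply_self, Equiv.Perm.mul_apply]
  rw [h1, ← Finset.mul_prod_erase Finset.univ (fun i => A (σ i) (Equiv.swap j j' i))
      (Finset.mem_univ j),
    ← Finset.mul_prod_erase _ (fun i => A (σ i) (Equiv.swap j j' i))
      (Finset.mem_erase.2 ⟨Ne.symm hjj, Finset.mem_univ j'⟩)]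
  rw [Equiv.swap_apply_left, Equiv.swap_apply_right]
  congr 2
  refine Finset.prod_congr rfl fun i hi => ?_
  rw [Finset.mem_erase, Finset.mem_erase] at hi
  rw [Equiv.swap_apply_of_ne_of_ne hi.2.1 hi.1]

/-- Every non-identity permutation has an inversion. -/
lemma exists_inversion {σ : Equiv.Perm (Fin n)} (hσ : σ ≠ 1) :
    ∃ p : Fin n × Fin n, p.1 < p.2 ∧ σ p.2 < σ p.1 := by
  by_contra hcon
  push_neg at hcon
  have hmono : StrictMono σ := by
    intro a b hab
    have := hcon (a, b) hab
    exact lt_of_le_of_ne this (fun he => absurd (σ.injective he) (ne_of_lt hab))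
  have : StrictMono.orderIsoOfSurjective (σ : Fin n → Fin n) hmono σ.surjective
      = OrderIso.refl (Fin n) := Subsingleton.elim _ _
  apply hσ
  ext x
  have h2 := congrFun (congrArg (fun e : Fin n ≃o Fin n => (e : Fin n → Fin n)) this) x
  simp only [StrictMono.coe_orderIsoOfSurjective, OrderIso.refl_apply] at h2
  simp [h2]

end Aux

/-- A positive n×n matrix in TN_{2,C} with C ≥ (n-1)² has nonnegative determinant,
and positive determinant when the inequalities are strict. -/
theorem det_nonneg_of_TN2C (n : ℕ) (hn : 2 ≤ n) (C : ℝ) (hC : ((n : ℝ) - 1) ^ 2 ≤ C)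
    (A : Matrix (Fin n) (Fin n) ℝ) (hpos : ∀ i j, 0 < A i j)
    (h : ∀ i i' j j' : Fin n, i < i' → j < j' → C * (A i j' * A i' j) ≤ A i j * A i' j') :
    0 ≤ A.det ∧
      ((∀ i i' j j' : Fin n, i < i' → j < j' → C * (A i j' * A i' j) < A i j * A i' j') →
        0 < A.det) := by
  classical
  have hn1 : (1 : ℝ) ≤ (n : ℝ) - 1 := by
    have : (2 : ℝ) ≤ (n : ℝ) := by exact_mod_cast hn
    linarith
  have hCpos : (0 : ℝ) < C := by nlinarith
  -- positivity of permutation products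
  have hprodpos : ∀ σ : Equiv.Perm (Fin n), 0 < ∏ i, A (σ i) i :=
    fun σ => Finset.prod_pos fun i _ => hpos _ _
  -- the even / odd permutation sets
  set E : Finset (Equiv.Perm (Fin n)) :=
    Finset.univ.filter (fun σ => Equiv.Perm.sign σ = 1) with hE
  set O : Finset (Equiv.Perm (Fin n)) :=
    Finset.univ.filter (fun σ => Equiv.Perm.sign σ ≠ 1) with hO
  have hsign : ∀ σ ∈ O, Equiv.Perm.sign σ = -1 := by
    intro σ hσ
    rcases Int.units_eq_one_or (Equiv.Perm.sign σ) with h1 | h1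
    · exact absurd h1 (Finset.mem_filter.1 hσ).2
    · exact h1
  -- determinant as difference of the two sums
  have hdet : A.det = (∑ σ ∈ E, ∏ i, A (σ i) i) - ∑ σ ∈ O, ∏ i, A (σ i) i := by
    rw [Matrix.det_apply]
    rw [← Finset.sum_filter_add_sum_filter_not Finset.univ
      (fun σ => Equiv.Perm.sign σ = 1)]
    rw [sub_eq_add_neg, ← Finset.sum_neg_distrib]
    congr 1
    · exact Finset.sum_congr rfl fun σ hσ => by
        rw [(Finset.mem_filter.1 hσ).2]; simp
    · exact Finset.sum_congr rfl fun σ hσ => by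
        rw [hsign σ hσ]; simp
  -- choice of a canonical inversion for each odd permutation
  have hne1 : ∀ σ ∈ O, σ ≠ 1 := by
    intro σ hσ he
    apply (Finset.mem_filter.1 hσ).2
    rw [he, Equiv.Perm.sign_one]
  have hinv : ∀ σ ∈ O, ∃ p : Fin n × Fin n, p.1 < p.2 ∧ σ p.2 < σ p.1 := by
    intro σ hσ; exact exists_inversion (hne1 σ hσ)
  -- the pair function and swap function
  have hnz : 0 < n := by omega
  let z : Fin n := ⟨0, hnz⟩
  let o : Fin n := ⟨1, by omega⟩
  let p : Equiv.Perm (Fin n) → Fin n × Fin n := fun σ =>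
    if hσ : ∃ q : Fin n × Fin n, q.1 < q.2 ∧ σ q.2 < σ q.1 then Classical.choose hσ
    else (z, z)
  have hp : ∀ σ ∈ O, (p σ).1 < (p σ).2 ∧ σ (p σ).2 < σ (p σ).1 := by
    intro σ hσ
    have hex := hinv σ hσ
    simp only [p, dif_pos hex]
    exact Classical.choose_spec hex
  let f : Equiv.Perm (Fin n) → Equiv.Perm (Fin n) := fun σ =>
    σ * Equiv.swap (p σ).1 (p σ).2
  -- the key product inequality
  have key : ∀ σ ∈ O, C * ∏ i, A (σ i) i ≤ ∏ i, A (f σ i) i := by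
    intro σ hσ
    obtain ⟨hlt, hinvlt⟩ := hp σ hσ
    have hjj : (p σ).1 ≠ (p σ).2 := ne_of_lt hlt
    rw [show (∏ i, A (f σ i) i) = ∏ i, A ((σ * Equiv.swap (p σ).1 (p σ).2) i) i from rfl,
      prod_swap_split A σ hjj, prod_split A σ hjj]
    have hT : 0 < ∏ i ∈ (Finset.univ.erase (p σ).1).erase (p σ).2, A (σ i) i :=
      Finset.prod_pos fun i _ => hpos _ _
    have := h (σ (p σ).2) (σ (p σ).1) (p σ).1 (p σ).2 hinvlt hlt
    nlinarith [hpos (σ (p σ).1) (p σ).1, hpos (σ (p σ).2) (p σ).2,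
      hpos (σ (p σ).1) (p σ).2, hpos (σ (p σ).2) (p σ).1]
  have keylt : (∀ i i' j j' : Fin n, i < i' → j < j' →
      C * (A i j' * A i' j) < A i j * A i' j') →
      ∀ σ ∈ O, C * ∏ i, A (σ i) i < ∏ i, A (f σ i) i := by
    intro hs σ hσ
    obtain ⟨hlt, hinvlt⟩ := hp σ hσ
    have hjj : (p σ).1 ≠ (p σ).2 := ne_of_lt hlt
    rw [show (∏ i, A (f σ i) i) = ∏ i, A ((σ * Equiv.swap (p σ).1 (p σ).2) i) i from rfl,
      prod_swap_split A σ hjj, prod_split A σ hjj]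
    have hT : 0 < ∏ i ∈ (Finset.univ.erase (p σ).1).erase (p σ).2, A (σ i) i :=
      Finset.prod_pos fun i _ => hpos _ _
    have := hs (σ (p σ).2) (σ (p σ).1) (p σ).1 (p σ).2 hinvlt hlt
    nlinarith [hpos (σ (p σ).1) (p σ).1, hpos (σ (p σ).2) (p σ).2,
      hpos (σ (p σ).1) (p σ).2, hpos (σ (p σ).2) (p σ).1]
  -- f maps O into E
  have hfE : ∀ σ ∈ O, f σ ∈ E := by
    intro σ hσ
    have hlt := (hp σ hσ).1
    rw [hE, Finset.mem_filter]
    refine ⟨Finset.mem_univ _, ?_⟩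
    rw [show f σ = σ * Equiv.swap (p σ).1 (p σ).2 from rfl, Equiv.Perm.sign_mul,
      Equiv.Perm.sign_swap (ne_of_lt hlt), hsign σ hσ]
    decide
  -- the pairs finset
  set P : Finset (Fin n × Fin n) := Finset.univ.filter (fun q => q.1 < q.2) with hP
  -- injection φ : O → P ×ˢ E
  let φ : Equiv.Perm (Fin n) → (Fin n × Fin n) × Equiv.Perm (Fin n) :=
    fun σ => (p σ, f σ)
  have hφinj : ∀ σ ∈ O, ∀ τ ∈ O, φ σ = φ τ → σ = τ := by
    intro σ hσ τ hτ he
    have h1 : p σ = p τ := congrArg Prod.fst he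
    have h2 : f σ = f τ := congrArg Prod.snd he
    have : σ * Equiv.swap (p σ).1 (p σ).2 = τ * Equiv.swap (p σ).1 (p σ).2 := by
      rw [show σ * Equiv.swap (p σ).1 (p σ).2 = f σ from rfl, h2, h1]
    exact mul_right_cancel this
  have hφmem : ∀ σ ∈ O, φ σ ∈ P ×ˢ E := by
    intro σ hσ
    rw [Finset.mem_product]
    exact ⟨Finset.mem_filter.2 ⟨Finset.mem_univ _, (hp σ hσ).1⟩, hfE σ hσ⟩
  -- sum over O of the swapped products is bounded
  have hsum1 : ∑ σ ∈ O, ∏ i, A (f σ i) i ≤ (P.card : ℝ) * ∑ τ ∈ E, ∏ i, A (τ i) i := by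
    have h1 : ∑ σ ∈ O, ∏ i, A (f σ i) i = ∑ x ∈ O.image φ, ∏ i, A (x.2 i) i := by
      rw [Finset.sum_image (fun σ hσ τ hτ => hφinj σ hσ τ hτ)]
    have h2 : ∑ x ∈ O.image φ, ∏ i, A (x.2 i) i ≤
        ∑ x ∈ P ×ˢ E, ∏ i, A (x.2 i) i := by
      apply Finset.sum_le_sum_of_subset_of_nonneg
      · intro x hx
        obtain ⟨σ, hσ, rfl⟩ := Finset.mem_image.1 hx
        exact hφmem σ hσ
      · intro x _ _
        exact le_of_lt (hprodpos _)
    have h3 : ∑ x ∈ P ×ˢ E, ∏ i, A (x.2 i) i =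
        (P.card : ℝ) * ∑ τ ∈ E, ∏ i, A (τ i) i := by
      rw [Finset.sum_product]
      simp only []
      rw [Finset.sum_const, nsmul_eq_mul]
    rw [h1]; rw [h3] at h2; exact h2
  -- bound the number of pairs
  have hPcard : (P.card : ℝ) ≤ C := by
    have hinj : ∀ q ∈ P, ∀ q' ∈ P,
        ((fun q : Fin n × Fin n => ((q.1 : ℕ), (q.2 : ℕ) - 1)) q =
          (fun q : Fin n × Fin n => ((q.1 : ℕ), (q.2 : ℕ) - 1)) q') → q = q' := by
      intro q hq q' hq' he
      have hq2 : 0 < (q.2 : ℕ) := by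
        have := (Finset.mem_filter.1 hq).2
        exact lt_of_le_of_lt (Nat.zero_le _) this
      have hq'2 : 0 < (q'.2 : ℕ) := by
        have := (Finset.mem_filter.1 hq').2
        exact lt_of_le_of_lt (Nat.zero_le _) this
      have h1 : (q.1 : ℕ) = (q'.1 : ℕ) := congrArg Prod.fst he
      have h2 : (q.2 : ℕ) - 1 = (q'.2 : ℕ) - 1 := congrArg Prod.snd he
      have h2' : (q.2 : ℕ) = (q'.2 : ℕ) := by omega
      exact Prod.ext (Fin.ext h1) (Fin.ext h2')
    have hmem : ∀ q ∈ P, ((q.1 : ℕ), (q.2 : ℕ) - 1) ∈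
        Finset.range (n - 1) ×ˢ Finset.range (n - 1) := by
      intro q hq
      have hlt := (Finset.mem_filter.1 hq).2
      rw [Finset.mem_product, Finset.mem_range, Finset.mem_range]
      have h1 : (q.1 : ℕ) < (q.2 : ℕ) := hlt
      have h2 : (q.2 : ℕ) < n := q.2.isLt
      omega
    have hcard : P.card ≤ (n - 1) * (n - 1) := by
      have := Finset.card_le_card_of_injOn
        (fun q : Fin n × Fin n => ((q.1 : ℕ), (q.2 : ℕ) - 1)) hmem
        (fun q hq q' hq' => hinj q hq q' hq')
      simpa [Finset.card_product] using this
    have hcast : ((n - 1 : ℕ) : ℝ) = (n : ℝ) - 1 := by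
      have : (1 : ℕ) ≤ n := le_trans one_le_two hn
      push_cast [Nat.cast_sub this]
      ring
    calc (P.card : ℝ) ≤ ((n - 1) * (n - 1) : ℕ) := by exact_mod_cast hcard
      _ = ((n : ℝ) - 1) ^ 2 := by push_cast [hcast]; ring
      _ ≤ C := hC
  have hEpos : 0 ≤ ∑ τ ∈ E, ∏ i, A (τ i) i :=
    Finset.sum_nonneg fun τ _ => le_of_lt (hprodpos τ)
  -- the main chain for the nonnegativity claim
  have hOsum : ∑ σ ∈ O, ∏ i, A (σ i) i ≤ ∑ τ ∈ E, ∏ i, A (τ i) i := by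
    have h1 : C * ∑ σ ∈ O, ∏ i, A (σ i) i ≤ ∑ σ ∈ O, ∏ i, A (f σ i) i := by
      rw [Finset.mul_sum]
      exact Finset.sum_le_sum key
    have h2 : C * ∑ σ ∈ O, ∏ i, A (σ i) i ≤ (P.card : ℝ) * ∑ τ ∈ E, ∏ i, A (τ i) i :=
      le_trans h1 hsum1
    have h3 : (P.card : ℝ) * (∑ τ ∈ E, ∏ i, A (τ i) i) ≤
        C * ∑ τ ∈ E, ∏ i, A (τ i) i :=
      mul_le_mul_of_nonneg_right hPcard hEpos
    have := le_trans h2 h3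
    exact le_of_mul_le_mul_left this hCpos
  constructor
  · rw [hdet]; linarith
  · intro hs
    have hOne : (Equiv.swap z o) ∈ O := by
      rw [hO, Finset.mem_filter]
      refine ⟨Finset.mem_univ _, ?_⟩
      have h01 : z ≠ o := by
        intro he
        have := congrArg Fin.val he
        simp [z, o] at this
      rw [Equiv.Perm.sign_swap h01]
      decide
    have hOlt : ∑ σ ∈ O, ∏ i, A (σ i) i < ∑ τ ∈ E, ∏ i, A (τ i) i := by
      have h1 : C * ∑ σ ∈ O, ∏ i, A (σ i) i < ∑ σ ∈ O, ∏ i, A (f σ i) i := by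
        rw [Finset.mul_sum]
        exact Finset.sum_lt_sum_of_nonempty ⟨_, hOne⟩ (keylt hs)
      have h3 : (P.card : ℝ) * (∑ τ ∈ E, ∏ i, A (τ i) i) ≤
          C * ∑ τ ∈ E, ∏ i, A (τ i) i :=
        mul_le_mul_of_nonneg_right hPcard hEpos
      have := lt_of_lt_of_le h1 (le_trans hsum1 h3)
      exact lt_of_mul_lt_mul_left this (le_of_lt hCpos)
    rw [hdet]; linarith
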